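/- For all nonnegative integers t, α and all n ≥ 0, the number of overpartition t-tuples satisfies p̄_t(2^{2α+2}·n + 3·2^{2α}) ≡ 0 (mod 4). -/

import Mathlib

/-- The number of overpartitions of `n`: a partition of `n` together with a
choice of which distinct part values are overlined (the first occurrence of a
part value may be overlined), so that the count is `∑_{λ ⊢ n} 2^{#distinct parts of λ}`. -/
def overpartitionCount (n : ℕ) : ℕ :=
  ∑ p : n.Partition, 2 ^ p.parts.toFinset.card

/-- The number of overpartition `t`-tuples of `n`: `t`-tuples of overpartitions
whose sizes sum to `n`. -/
def overpartitionTuples (t n : ℕ) : ℕ :=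
  ∑ c ∈ Finset.Nat.antidiagonalTuple t n, ∏ i, overpartitionCount (c i)

lemma oc_zero : overpartitionCount 0 = 1 := by
  rw [overpartitionCount, Fintype.sum_unique]
  simp

lemma parts_card_ne_zero {m : ℕ} (hm : m ≠ 0) (p : m.Partition) :
    p.parts.toFinset.card ≠ 0 := by
  intro h
  rw [Finset.card_eq_zero, Multiset.toFinset_eq_empty] at h
  exact hm (by simpa [h] using p.parts_sum.symm)

lemma two_dvd_oc {m : ℕ} (hm : m ≠ 0) : 2 ∣ overpartitionCount m :=
  Finset.dvd_sum fun p _ => dvd_pow_self 2 (parts_card_ne_zero hm p)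

/-- If a partition has exactly one distinct part, it is a replicate. -/
lemma parts_eq_replicate {m : ℕ} (hm : m ≠ 0) (p : m.Partition)
    (h : p.parts.toFinset.card = 1) :
    p.parts = Multiset.replicate p.parts.card (m / p.parts.card) ∧
      p.parts.card * (m / p.parts.card) = m := by
  obtain ⟨d, hd⟩ := Finset.card_eq_one.mp h
  have hall : ∀ x ∈ p.parts, x = d := by
    intro x hx
    have : x ∈ p.parts.toFinset := Multiset.mem_toFinset.mpr hx
    rw [hd] at this
    exact Finset.mem_singleton.mp this
  have hrep : p.parts = Multiset.replicate p.parts.card d :=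
    Multiset.eq_replicate_card.mpr hall
  have hsum : p.parts.card * d = m := by
    have := p.parts_sum
    rw [hrep] at this
    simpa [Multiset.sum_replicate, smul_eq_mul] using this
  have hcpos : p.parts.card ≠ 0 := by
    intro h0
    rw [h0, zero_mul] at hsum
    exact hm hsum.symm
  have hdiv : m / p.parts.card = d := by
    exact Nat.div_eq_of_eq_mul_left (Nat.pos_of_ne_zero hcpos)
      (hsum.symm.trans (Nat.mul_comm _ _))
  rw [hdiv]
  exact ⟨hrep, hsum⟩

/-- Flip a one-distinct-part partition: `k` copies of `d` becomes `d` copies of `k`. -/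
noncomputable def flipPartition {m : ℕ} (hm : m ≠ 0) (p : m.Partition) : m.Partition :=
  if h : p.parts.toFinset.card = 1 then
    { parts := Multiset.replicate (m / p.parts.card) p.parts.card
      parts_pos := by
        intro i hi
        rw [Multiset.eq_of_mem_replicate hi]
        have := parts_card_ne_zero hm p
        have hc : p.parts.card ≠ 0 := by
          intro h0
          apply this
          rw [Finset.card_eq_zero, Multiset.toFinset_eq_empty]
          exact Multiset.card_eq_zero.mp h0
        exact Nat.pos_of_ne_zero hc
      parts_sum := by
        have := (parts_eq_replicate hm p h).2
        rw [Multiset.sum_replicate, smul_eq_mul, Nat.mul_comm]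
        exact this }
  else p


lemma flip_parts {m : ℕ} (hm : m ≠ 0) (p : m.Partition) (h : p.parts.toFinset.card = 1) :
    (flipPartition hm p).parts = Multiset.replicate (m / p.parts.card) p.parts.card := by
  rw [flipPartition, dif_pos h]

lemma flip_id {m : ℕ} (hm : m ≠ 0) (p : m.Partition) (h : p.parts.toFinset.card ≠ 1) :
    flipPartition hm p = p := by rw [flipPartition, dif_neg h]

lemma div_card_ne_zero {m : ℕ} (hm : m ≠ 0) (p : m.Partition)
    (h : p.parts.toFinset.card = 1) : m / p.parts.card ≠ 0 := by
  intro h0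
  have := (parts_eq_replicate hm p h).2
  rw [h0, Nat.mul_zero] at this
  exact hm this.symm

lemma flip_card {m : ℕ} (hm : m ≠ 0) (p : m.Partition) (h : p.parts.toFinset.card = 1) :
    (flipPartition hm p).parts.toFinset.card = 1 := by
  rw [flip_parts hm p h, Multiset.toFinset_replicate, if_neg (div_card_ne_zero hm p h)]
  simp

lemma zmod4_two_pow {c : ℕ} (hc : c ≠ 0) (hc1 : c ≠ 1) : (2 : ZMod 4) ^ c = 0 := by
  obtain ⟨k, rfl⟩ : ∃ k, c = k + 2 := ⟨c - 2, by omega⟩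
  rw [pow_add]
  have h4 : (2 : ZMod 4) ^ 2 = 0 := by decide
  rw [h4, mul_zero]

lemma flip_flip' {m : ℕ} (hm : m ≠ 0) (p : m.Partition) :
    flipPartition hm (flipPartition hm p) = p := by
  by_cases h : p.parts.toFinset.card = 1
  · have h2 := flip_card hm p h
    apply Nat.Partition.ext
    rw [flip_parts hm _ h2, flip_parts hm p h]
    have hrep := (parts_eq_replicate hm p h).1
    have hmul := (parts_eq_replicate hm p h).2
    have hcard : Multiset.card (Multiset.replicate (m / Multiset.card p.parts)
        (Multiset.card p.parts)) = m / Multiset.card p.parts := Multiset.card_replicate _ _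
    rw [hcard]
    have hdne : m / Multiset.card p.parts ≠ 0 := div_card_ne_zero hm p h
    have : m / (m / Multiset.card p.parts) = Multiset.card p.parts := by
      exact Nat.div_eq_of_eq_mul_left (Nat.pos_of_ne_zero hdne) hmul.symm
    rw [this]
    exact hrep.symm
  · rw [flip_id hm p h, flip_id hm p h]

lemma four_dvd_oc {m : ℕ} (hm : m ≠ 0) (hs : ¬ IsSquare m) : 4 ∣ overpartitionCount m := by
  have key : ((overpartitionCount m : ℕ) : ZMod 4) = 0 := by
    rw [overpartitionCount]
    push_cast
    refine Finset.sum_ninvolution (flipPartition hm) ?_ ?_ (fun _ => Finset.mem_univ _) ?_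
    · intro p
      by_cases h : p.parts.toFinset.card = 1
      · rw [h, flip_card hm p h]
        decide
      · rw [flip_id hm p h, zmod4_two_pow (parts_card_ne_zero hm p) h]
        decide
    · intro p hp hne
      have h : p.parts.toFinset.card = 1 := by
        by_contra h
        exact hp (zmod4_two_pow (parts_card_ne_zero hm p) h)
      have hparts := congrArg Nat.Partition.parts hne
      rw [flip_parts hm p h] at hparts
      have hcards := congrArg Multiset.card hparts
      rw [Multiset.card_replicate] at hcards
      have hmul := (parts_eq_replicate hm p h).2
      rw [hcards] at hmul
      exact hs ⟨Multiset.card p.parts, hmul.symm⟩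
    · exact flip_flip' hm
  exact (ZMod.natCast_eq_zero_iff _ _).mp key

lemma not_isSquare_target (α n : ℕ) : ¬ IsSquare (2 ^ (2 * α + 2) * n + 3 * 2 ^ (2 * α)) := by
  rintro ⟨r, hr⟩
  have hform : 2 ^ (2 * α + 2) * n + 3 * 2 ^ (2 * α) = (2 ^ α) ^ 2 * (4 * n + 3) := by ring
  rw [hform] at hr
  have hdvd : (2 ^ α) ^ 2 ∣ r ^ 2 := ⟨4 * n + 3, by rw [sq]; exact hr.symm⟩
  have hcd : (2 : ℕ) ^ α ∣ r := (Nat.pow_dvd_pow_iff two_ne_zero).mp hdvd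
  obtain ⟨u, rfl⟩ := hcd
  have hpos : 0 < (2 : ℕ) ^ α * 2 ^ α := by positivity
  have hu : 4 * n + 3 = u * u := by
    have : (2 ^ α * 2 ^ α) * (4 * n + 3) = (2 ^ α * 2 ^ α) * (u * u) := by
      linear_combination hr
    exact Nat.eq_of_mul_eq_mul_left hpos this
  have hz : ((4 * n + 3 : ℕ) : ZMod 4) = (u : ZMod 4) * (u : ZMod 4) := by
    rw [hu]; push_cast; ring
  have h3 : ((4 * n + 3 : ℕ) : ZMod 4) = 3 := by
    push_cast
    rw [show (4 : ZMod 4) = 0 by decide]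
    ring
  have : ∀ x : ZMod 4, x * x ≠ 3 := by decide
  exact this _ (h3 ▸ hz).symm

lemma four_dvd_tuples {N : ℕ} (hN0 : N ≠ 0) (hNsq : ¬ IsSquare N) (t : ℕ) :
    4 ∣ overpartitionTuples t N := by
  classical
  rw [overpartitionTuples,
    ← Finset.sum_filter_add_sum_filter_not (Finset.Nat.antidiagonalTuple t N)
      (fun c => ∃ i j, i ≠ j ∧ c i ≠ 0 ∧ c j ≠ 0) (fun c => ∏ i, overpartitionCount (c i))]
  apply Nat.dvd_add
  · refine Finset.dvd_sum fun c hc => ?_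
    obtain ⟨i, j, hij, hi, hj⟩ := (Finset.mem_filter.mp hc).2
    have hjmem : j ∈ Finset.univ.erase i :=
      Finset.mem_erase.mpr ⟨Ne.symm hij, Finset.mem_univ j⟩
    rw [← Finset.mul_prod_erase _ _ (Finset.mem_univ i),
      ← Finset.mul_prod_erase _ _ hjmem, ← mul_assoc]
    exact Dvd.dvd.mul_right
      (by simpa using mul_dvd_mul (two_dvd_oc hi) (two_dvd_oc hj)) _
  · have himg : (Finset.Nat.antidiagonalTuple t N).filter
        (fun c => ¬ ∃ i j, i ≠ j ∧ c i ≠ 0 ∧ c j ≠ 0) =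
        Finset.univ.image (fun i : Fin t => Pi.single i N) := by
      ext c
      constructor
      · intro hc
        obtain ⟨hmem, hnp⟩ := Finset.mem_filter.mp hc
        push_neg at hnp
        have hsum : ∑ i, c i = N := Finset.Nat.mem_antidiagonalTuple.mp hmem
        have hex : ∃ i, c i ≠ 0 := by
          by_contra hall
          push_neg at hall
          exact hN0 (by rw [← hsum]; simp [hall])
        obtain ⟨i, hi⟩ := hex
        refine Finset.mem_image.mpr ⟨i, Finset.mem_univ i, funext fun j => ?_⟩
        rw [Pi.single_apply]
        by_cases hji : j = i
        · subst hji
          rw [if_pos rfl, ← hsum]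
          exact Finset.sum_eq_single j (fun b _ hb => hnp j b (fun h => hb h.symm) hi)
            (fun h => absurd (Finset.mem_univ j) h)
        · rw [if_neg hji]
          exact (hnp i j (fun h => hji h.symm) hi).symm
      · intro hc
        obtain ⟨i, _, rfl⟩ := Finset.mem_image.mp hc
        refine Finset.mem_filter.mpr ⟨?_, ?_⟩
        · rw [Finset.Nat.mem_antidiagonalTuple]
          exact Fintype.sum_pi_single' i N
        · rintro ⟨a, b, hab, ha, hb⟩
          have ha' : a = i := by
            by_contra h
            exact ha (by rw [Pi.single_apply, if_neg h])
          have hb' : b = i := by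
            by_contra h
            exact hb (by rw [Pi.single_apply, if_neg h])
          exact hab (ha'.trans hb'.symm)
    rw [himg, Finset.sum_image (fun x _ y _ hxy => by
      by_contra h
      have h2 := congrFun hxy x
      rw [Pi.single_eq_same, Pi.single_apply, if_neg h] at h2
      exact hN0 h2)]
    have hprod : ∀ i : Fin t,
        ∏ j, overpartitionCount (Pi.single (M := fun _ : Fin t => ℕ) i N j)
        = overpartitionCount N := by
      intro i
      rw [Finset.prod_eq_single i
        (fun j _ hj => by rw [Pi.single_apply, if_neg hj, oc_zero])
        (fun h => absurd (Finset.mem_univ i) h), Pi.single_eq_same]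
    rw [Finset.sum_congr rfl (fun i _ => hprod i), Finset.sum_const, Finset.card_univ,
      Fintype.card_fin, smul_eq_mul]
    rcases Nat.even_or_odd t with ⟨u, hu⟩ | _
    · obtain ⟨v, hv⟩ := two_dvd_oc hN0
      exact ⟨u * v, by rw [hu, hv]; ring⟩
    · exact Dvd.dvd.mul_left (four_dvd_oc hN0 hNsq) t

theorem overpartitionTuples_three_pow_two_mod_four (t α n : ℕ) :
    overpartitionTuples t (2 ^ (2 * α + 2) * n + 3 * 2 ^ (2 * α)) ≡ 0 [MOD 4] := by
  have hN0 : 2 ^ (2 * α + 2) * n + 3 * 2 ^ (2 * α) ≠ 0 := by positivity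
  exact (Nat.modEq_zero_iff_dvd).mpr (four_dvd_tuples hN0 (not_isSquare_target α n) t)
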